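/- Let R be a prime Noetherian ring with Krull dimension n and let X be a set of primes p with Kdim(R/p) = m ≤ n, V = ∩_{p∈X} C(p), k = {right ideals I | I ∩ V ≠ ∅}, g = {right ideals I | Kdim(R/I) < m}. If k = g, then k is a Gabriel filter, and hence V is a right Ore set. -/

import Mathlib

open MulOpposite
universe u

/-- Gabriel–Rentschler deviation: `DevLE α P` means the deviation of the
poset `P` is at most `α`. -/
def DevLE : Ordinal.{u} → (P : Type u) → [inst : PartialOrder P] → Prop :=
  fun α P _ =>
    ∀ f : ℕ → P, (∀ n, f (n + 1) ≤ f n) →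
      ∃ N : ℕ, ∀ n, N ≤ n →
        f (n + 1) = f n ∨ ∃ β, ∃ _ : β < α, DevLE β (Set.Icc (f (n + 1)) (f n))
termination_by α => α

/-- Right ideals of `R`, as submodules of `R` viewed as a right module. -/
abbrev RightIdeal (R : Type u) [Ring R] : Type u := Submodule Rᵐᵒᵖ R

/-- Gabriel–Rentschler Krull dimension of a right `R`-module `M`
(least `α` bounding the deviation of the submodule lattice; junk value `0`
if no such ordinal exists). -/
noncomputable def rKdim (R : Type u) [Ring R] (M : Type u) [AddCommGroup M]
    [Module Rᵐᵒᵖ M] : Ordinal.{u} :=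
  sInf {α : Ordinal.{u} | DevLE α (Submodule Rᵐᵒᵖ M)}

/-- `x⁻¹(I) = {a | x * a ∈ I}`, a right ideal. -/
def preIdeal {R : Type u} [Ring R] (x : R) (I : RightIdeal R) : RightIdeal R where
  carrier := {a : R | x * a ∈ I}
  add_mem' := by intro a b ha hb; simpa [mul_add] using add_mem ha hb
  zero_mem' := by simp
  smul_mem' := by
    intro r a ha
    show x * (op (unop r) • a) ∈ I
    rw [op_smul_eq_mul, ← mul_assoc]
    exact I.smul_mem r ha

/-- `S` is a right Ore set. -/
def RightOre {R : Type u} [Ring R] (S : Set R) : Prop :=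
  ∀ r : R, ∀ s ∈ S, ∃ r' : R, ∃ s' ∈ S, r * s' = s * r'

/-- A multiplicatively closed set. -/
def MulClosed {R : Type u} [Ring R] (S : Set R) : Prop :=
  ∀ a ∈ S, ∀ b ∈ S, a * b ∈ S

/-- A Gabriel filter of right ideals. -/
def IsGabrielFilter {R : Type u} [Ring R] (F : Set (RightIdeal R)) : Prop :=
  (∀ I ∈ F, ∀ J : RightIdeal R, I ≤ J → J ∈ F) ∧
  (∀ I ∈ F, ∀ J ∈ F, I ⊓ J ∈ F) ∧
  (∀ I ∈ F, ∀ x : R, preIdeal x I ∈ F)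

/-- A right ideal that is two-sided. -/
def TwoSided {R : Type u} [Ring R] (I : RightIdeal R) : Prop :=
  ∀ r : R, ∀ x ∈ I, r * x ∈ I

/-- A (two-sided) prime ideal of a possibly noncommutative ring. -/
def IsPrimeIdeal {R : Type u} [Ring R] (p : RightIdeal R) : Prop :=
  TwoSided p ∧ p ≠ ⊤ ∧ ∀ a b : R, (∀ r : R, a * r * b ∈ p) → a ∈ p ∨ b ∈ p

/-- `C(p)`: the elements of `R` regular modulo `p`. -/
def CMod {R : Type u} [Ring R] (p : RightIdeal R) : Set R :=
  {c : R | (∀ a : R, c * a ∈ p → a ∈ p) ∧ (∀ a : R, a * c ∈ p → a ∈ p)}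

/-- A prime ring. -/
def IsPrimeRing (R : Type u) [Ring R] : Prop :=
  ∀ a b : R, (∀ r : R, a * r * b = 0) → a = 0 ∨ b = 0

/-- A right module is `V`-torsion. -/
def IsTorsionBy' {R : Type u} [Ring R] (V : Set R) (M : Type u) [AddCommGroup M]
    [Module Rᵐᵒᵖ M] : Prop :=
  ∀ x : M, ∃ v ∈ V, op v • x = 0

/-- The annihilator (as a set) of a right module. -/
def annSet (R : Type u) [Ring R] (M : Type u) [AddCommGroup M] [Module Rᵐᵒᵖ M] :
    Set R :=
  {a : R | ∀ x : M, op a • x = 0}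

/-- `R` is right fully bounded: in every prime factor, every essential right
ideal contains a nonzero two-sided ideal. -/
def RightFullyBounded (R : Type u) [Ring R] : Prop :=
  ∀ p : RightIdeal R, IsPrimeIdeal p →
    ∀ I : RightIdeal R, p ≤ I →
      (∀ J : RightIdeal R, p < J → p < I ⊓ J) →
      ∃ A : RightIdeal R, TwoSided A ∧ p < A ∧ A ≤ I

/-- A uniform right module: any two nonzero submodules intersect nontrivially. -/
def IsUniformMod (R : Type u) [Ring R] (M : Type u) [AddCommGroup M]
    [Module Rᵐᵒᵖ M] : Prop :=
  ∀ N N' : Submodule Rᵐᵒᵖ M, N ≠ ⊥ → N' ≠ ⊥ → N ⊓ N' ≠ ⊥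

/-- The annihilator (as a set of elements of `R`) of a submodule. -/
def annSubSet (R : Type u) [Ring R] {M : Type u} [AddCommGroup M]
    [Module Rᵐᵒᵖ M] (N : Submodule Rᵐᵒᵖ M) : Set R :=
  {a : R | ∀ x ∈ N, op a • x = 0}

/-- `q` is an associated (assassinator) prime of the right module `M`:
`q` is prime and is the annihilator of a nonzero submodule all of whose
nonzero submodules also have annihilator `q`. -/
def IsAssocPrime (R : Type u) [Ring R] (q : RightIdeal R) (M : Type u)
    [AddCommGroup M] [Module Rᵐᵒᵖ M] : Prop :=
  IsPrimeIdeal q ∧ ∃ N : Submodule Rᵐᵒᵖ M, N ≠ ⊥ ∧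
    ∀ N' : Submodule Rᵐᵒᵖ M, N' ≤ N → N' ≠ ⊥ → annSubSet R N' = (q : Set R)

/-- A critical right module: nonzero, and every proper quotient has strictly
smaller Krull dimension. -/
def IsCriticalMod (R : Type u) [Ring R] (M : Type u) [AddCommGroup M]
    [Module Rᵐᵒᵖ M] : Prop :=
  Nontrivial M ∧
    ∀ N : Submodule Rᵐᵒᵖ M, N ≠ ⊥ → rKdim R (M ⧸ N) < rKdim R M

/-- `M` is a fully faithful right `R/q`-module: `q` annihilates `M` and every
nonzero submodule of `M` has annihilator exactly `q`. -/
def FullyFaithfulOver (R : Type u) [Ring R] (q : RightIdeal R) (M : Type u)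
    [AddCommGroup M] [Module Rᵐᵒᵖ M] : Prop :=
  (q : Set R) ⊆ annSet R M ∧
    ∀ N : Submodule Rᵐᵒᵖ M, N ≠ ⊥ → annSubSet R N = (q : Set R)


/- ### Auxiliary lemmas about deviation and Krull dimension -/

theorem devLE_def' (α : Ordinal.{u}) (P : Type u) [PartialOrder P] :
    DevLE α P ↔ ∀ f : ℕ → P, (∀ n, f (n + 1) ≤ f n) →
      ∃ N : ℕ, ∀ n, N ≤ n →
        f (n + 1) = f n ∨ ∃ β, ∃ _ : β < α, DevLE β (Set.Icc (f (n + 1)) (f n)) := by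
  rw [DevLE]

theorem devLE_of_subsingleton' (α : Ordinal.{u}) (P : Type u) [PartialOrder P]
    [Subsingleton P] : DevLE α P := by
  rw [devLE_def']
  exact fun f hf => ⟨0, fun n _ => Or.inl (Subsingleton.elim _ _)⟩

def OrderEmbedding.iccRestrict' {P Q : Type*} [PartialOrder P] [PartialOrder Q]
    (e : Q ↪o P) (a b : Q) : Set.Icc a b ↪o Set.Icc (e a) (e b) where
  toFun x := ⟨e x.1, e.monotone x.2.1, e.monotone x.2.2⟩
  inj' x y h := Subtype.ext (e.injective (congrArg Subtype.val h))
  map_rel_iff' {x y} := by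
    show (⟨e x.1, _⟩ : Set.Icc (e a) (e b)) ≤ ⟨e y.1, _⟩ ↔ x ≤ y
    exact e.le_iff_le

theorem devLE_of_orderEmbedding (α : Ordinal.{u}) : ∀ {P Q : Type u} [PartialOrder P]
    [PartialOrder Q], (Q ↪o P) → DevLE α P → DevLE α Q := by
  induction α using Ordinal.induction with
  | h α IH =>
    intro P Q _ _ e hP
    rw [devLE_def'] at hP ⊢
    intro f hf
    obtain ⟨N, hN⟩ := hP (fun n => e (f n)) (fun n => e.monotone (hf n))
    refine ⟨N, fun n hn => ?_⟩
    rcases hN n hn with h | ⟨β, hβ, hd⟩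
    · exact Or.inl (e.injective h)
    · exact Or.inr ⟨β, hβ, IH β hβ (e.iccRestrict' _ _) hd⟩

/-- Order iso between an interval of a subtype and the interval of values. -/
def iccSubtypeIso' {P : Type*} [PartialOrder P] {p : P → Prop} (x y : Subtype p)
    (h : ∀ z : P, x.1 ≤ z → z ≤ y.1 → p z) : Set.Icc x y ≃o Set.Icc x.1 y.1 where
  toFun u := ⟨u.1.1, u.2.1, u.2.2⟩
  invFun v := ⟨⟨v.1, h v.1 v.2.1 v.2.2⟩, v.2.1, v.2.2⟩
  left_inv u := rfl
  right_inv v := rfl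
  map_rel_iff' := Iff.rfl

theorem devLE_of_Icc_eq' {P : Type u} [PartialOrder P] {x y : P} (h : x = y)
    (α : Ordinal.{u}) : DevLE α (Set.Icc x y) := by
  subst h
  haveI : Subsingleton (Set.Icc x x) :=
    ⟨fun u v => Subtype.ext ((le_antisymm u.2.2 u.2.1).trans (le_antisymm v.2.1 v.2.2))⟩
  exact devLE_of_subsingleton' α _

theorem devLE_extension (δ : Ordinal.{u}) : ∀ {L : Type u} [Lattice L] [IsModularLattice L]
    (a b c : L) (α β : Ordinal.{u}), α ≤ δ → β ≤ δ →
    DevLE α (Set.Icc (a ⊓ c) (b ⊓ c)) → DevLE β (Set.Icc (a ⊔ c) (b ⊔ c)) →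
    DevLE (max α β) (Set.Icc a b) := by
  induction δ using Ordinal.induction with
  | h δ IH =>
    intro L _ _ a b c α β hα hβ hinf hsup
    rw [devLE_def'] at hinf hsup ⊢
    intro f hf
    have hfv : ∀ n, (f (n+1)).1 ≤ (f n).1 := fun n => hf n
    obtain ⟨N1, hN1⟩ := hinf
      (fun n => ⟨(f n).1 ⊓ c, inf_le_inf_right c (f n).2.1, inf_le_inf_right c (f n).2.2⟩)
      (fun n => Subtype.mk_le_mk.mpr (inf_le_inf_right c (hfv n)))
    obtain ⟨N2, hN2⟩ := hsup
      (fun n => ⟨(f n).1 ⊔ c, sup_le_sup_right (f n).2.1 c, sup_le_sup_right (f n).2.2 c⟩)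
      (fun n => Subtype.mk_le_mk.mpr (sup_le_sup_right (hfv n) c))
    refine ⟨max N1 N2, fun n hn => ?_⟩
    have h1 := hN1 n (le_trans (le_max_left _ _) hn)
    have h2 := hN2 n (le_trans (le_max_right _ _) hn)
    have main : ∀ γ₁ γ₂ : Ordinal.{u}, max γ₁ γ₂ < max α β →
        DevLE γ₁ (Set.Icc ((f (n+1)).1 ⊓ c) ((f n).1 ⊓ c)) →
        DevLE γ₂ (Set.Icc ((f (n+1)).1 ⊔ c) ((f n).1 ⊔ c)) →
        f (n + 1) = f n ∨ ∃ β', ∃ _ : β' < max α β, DevLE β' (Set.Icc (f (n+1)) (f n)) := by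
      intro γ₁ γ₂ hlt hd1 hd2
      refine Or.inr ⟨max γ₁ γ₂, hlt, ?_⟩
      have hIcc := IH (max γ₁ γ₂) (lt_of_lt_of_le hlt (max_le hα hβ))
        (f (n+1)).1 (f n).1 c γ₁ γ₂ (le_max_left _ _) (le_max_right _ _) hd1 hd2
      exact devLE_of_orderEmbedding _
        ((iccSubtypeIso' (f (n+1)) (f n)
          (fun z h1 h2 => ⟨(f (n+1)).2.1.trans h1, h2.trans (f n).2.2⟩)).toOrderEmbedding)
        hIcc
    have tr1 : ∀ γ : Ordinal.{u}, ∀ x y : Set.Icc (a ⊓ c) (b ⊓ c), DevLE γ (Set.Icc x y) →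
        DevLE γ (Set.Icc x.1 y.1) := fun γ x y hd =>
      devLE_of_orderEmbedding _
        ((iccSubtypeIso' x y (fun z h1 h2 =>
          ⟨x.2.1.trans h1, h2.trans y.2.2⟩)).symm.toOrderEmbedding) hd
    have tr2 : ∀ γ : Ordinal.{u}, ∀ x y : Set.Icc (a ⊔ c) (b ⊔ c), DevLE γ (Set.Icc x y) →
        DevLE γ (Set.Icc x.1 y.1) := fun γ x y hd =>
      devLE_of_orderEmbedding _
        ((iccSubtypeIso' x y (fun z h1 h2 =>
          ⟨x.2.1.trans h1, h2.trans y.2.2⟩)).symm.toOrderEmbedding) hd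
    rcases h1 with h1 | ⟨γ₁, hγ₁, hd1⟩
    · have e1 : (f (n+1)).1 ⊓ c = (f n).1 ⊓ c := congrArg Subtype.val h1
      rcases h2 with h2 | ⟨γ₂, hγ₂, hd2⟩
      · have e2 : (f (n+1)).1 ⊔ c = (f n).1 ⊔ c := congrArg Subtype.val h2
        exact Or.inl (Subtype.ext (eq_of_le_of_inf_le_of_sup_le (hfv n) e1.ge e2.ge))
      · have hmax : max 0 γ₂ < max α β :=
          (max_eq_right (zero_le : (0 : Ordinal) ≤ γ₂)).le.trans_lt (hγ₂.trans_le (le_max_right α β))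
        exact main 0 γ₂ hmax (devLE_of_Icc_eq' e1 0) (tr2 γ₂ _ _ hd2)
    · rcases h2 with h2 | ⟨γ₂, hγ₂, hd2⟩
      · have e2 : (f (n+1)).1 ⊔ c = (f n).1 ⊔ c := congrArg Subtype.val h2
        have hmax : max γ₁ 0 < max α β :=
          (max_eq_left (zero_le : (0 : Ordinal) ≤ γ₁)).le.trans_lt (hγ₁.trans_le (le_max_left α β))
        exact main γ₁ 0 hmax (tr1 γ₁ _ _ hd1) (devLE_of_Icc_eq' e2 0)
      · exact main γ₁ γ₂ (max_lt_max hγ₁ hγ₂) (tr1 γ₁ _ _ hd1) (tr2 γ₂ _ _ hd2)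

section OrdEmb
variable {A M N : Type u} [Ring A] [AddCommGroup M] [AddCommGroup N] [Module A M] [Module A N]

noncomputable def ordembComap (f : M →ₗ[A] N) (hf : Function.Surjective f) :
    Submodule A N ↪o Submodule A M :=
  OrderEmbedding.ofMapLEIff (Submodule.comap f)
    (fun _ _ => Submodule.comap_le_comap_iff_of_surjective hf)

noncomputable def ordembMap (f : M →ₗ[A] N) (hf : Function.Injective f) :
    Submodule A M ↪o Submodule A N :=
  OrderEmbedding.ofMapLEIff (Submodule.map f)
    (fun p q => Submodule.map_le_map_iff_of_injective hf p q)
end OrdEmb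

section KdimFacts
variable {R : Type u} [Ring R]

theorem rKdim_le_of_devLE {M : Type u} [AddCommGroup M] [Module Rᵐᵒᵖ M]
    {α : Ordinal.{u}} (h : DevLE α (Submodule Rᵐᵒᵖ M)) : rKdim R M ≤ α :=
  csInf_le' h

theorem devLE_quot {ν : Ordinal.{u}} (hD : DevLE ν (Submodule Rᵐᵒᵖ R))
    (I : RightIdeal R) : DevLE ν (Submodule Rᵐᵒᵖ (R ⧸ I)) :=
  devLE_of_orderEmbedding ν (ordembComap I.mkQ I.mkQ_surjective) hD

theorem devLE_rKdim_quot {ν : Ordinal.{u}} (hD : DevLE ν (Submodule Rᵐᵒᵖ R))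
    (I : RightIdeal R) : DevLE (rKdim R (R ⧸ I)) (Submodule Rᵐᵒᵖ (R ⧸ I)) := by
  have h : rKdim R (R ⧸ I) ∈ {α : Ordinal.{u} | DevLE α (Submodule Rᵐᵒᵖ (R ⧸ I))} :=
    csInf_mem ⟨ν, devLE_quot hD I⟩
  exact h

noncomputable def factorMap (I J : RightIdeal R) (h : I ≤ J) :
    (R ⧸ I) →ₗ[Rᵐᵒᵖ] (R ⧸ J) :=
  Submodule.mapQ I J LinearMap.id (by rwa [Submodule.comap_id])

theorem factorMap_mk (I J : RightIdeal R) (h : I ≤ J) (w : R) :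
    factorMap I J h (I.mkQ w) = J.mkQ w := by
  simp [factorMap, Submodule.mkQ_apply, Submodule.mapQ_apply]

theorem factorMap_surjective (I J : RightIdeal R) (h : I ≤ J) :
    Function.Surjective (factorMap I J h) := by
  intro z
  obtain ⟨w, rfl⟩ := J.mkQ_surjective z
  exact ⟨I.mkQ w, factorMap_mk I J h w⟩

theorem rKdim_quot_mono {ν : Ordinal.{u}} (hD : DevLE ν (Submodule Rᵐᵒᵖ R))
    {I J : RightIdeal R} (h : I ≤ J) : rKdim R (R ⧸ J) ≤ rKdim R (R ⧸ I) :=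
  rKdim_le_of_devLE (devLE_of_orderEmbedding _
    (ordembComap (factorMap I J h) (factorMap_surjective I J h)) (devLE_rKdim_quot hD I))

theorem rKdim_quot_inf {ν : Ordinal.{u}} (hD : DevLE ν (Submodule Rᵐᵒᵖ R))
    (I J : RightIdeal R) :
    rKdim R (R ⧸ (I ⊓ J)) ≤ max (rKdim R (R ⧸ I)) (rKdim R (R ⧸ J)) := by
  set K : RightIdeal R := I ⊓ J with hK
  set c : Submodule Rᵐᵒᵖ (R ⧸ K) := J.map K.mkQ with hc
  have hKI : K ≤ I := inf_le_left
  have hKJ : K ≤ J := inf_le_right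
  set φI := factorMap K I hKI with hφI
  set φJ := factorMap K J hKJ with hφJ
  have refl1 : ∀ p q : Submodule Rᵐᵒᵖ (R ⧸ K), p ≤ c → q ≤ c →
      p.map φI ≤ q.map φI → p ≤ q := by
    intro p q hpc hqc h z hz
    obtain ⟨z', hz'q, hzz⟩ := h (Submodule.mem_map_of_mem hz)
    obtain ⟨w, hwJ, hw⟩ := hpc hz
    obtain ⟨w', hw'J, hw'⟩ := hqc hz'q
    rw [← hw, ← hw', factorMap_mk, factorMap_mk, Submodule.mkQ_apply, Submodule.mkQ_apply,
      Submodule.Quotient.eq] at hzz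
    have hwK : w' - w ∈ K := by
      rw [hK]
      exact ⟨hzz, sub_mem hw'J hwJ⟩
    have heq : K.mkQ w = K.mkQ w' := by
      rw [Submodule.mkQ_apply, Submodule.mkQ_apply, Submodule.Quotient.eq]
      simpa using neg_mem hwK
    rw [← hw, heq, hw']
    exact hz'q
  have refl2 : ∀ p q : Submodule Rᵐᵒᵖ (R ⧸ K), c ≤ q →
      p.map φJ ≤ q.map φJ → p ≤ q := by
    intro p q hcq h z hz
    obtain ⟨w, rfl⟩ := K.mkQ_surjective z
    obtain ⟨z', hz'q, hzz⟩ := h (Submodule.mem_map_of_mem hz)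
    obtain ⟨w', rfl⟩ := K.mkQ_surjective z'
    rw [factorMap_mk, factorMap_mk, Submodule.mkQ_apply, Submodule.mkQ_apply,
      Submodule.Quotient.eq] at hzz
    have hmem : K.mkQ (w' - w) ∈ q := hcq ⟨w' - w, hzz, rfl⟩
    have heq : K.mkQ w = K.mkQ w' - K.mkQ (w' - w) := by
      rw [← map_sub, sub_sub_cancel]
    rw [heq]
    exact sub_mem hz'q hmem
  have e1 : Set.Icc ((⊥ : Submodule Rᵐᵒᵖ (R ⧸ K)) ⊓ c) ((⊤ : Submodule Rᵐᵒᵖ (R ⧸ K)) ⊓ c)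
      ↪o Submodule Rᵐᵒᵖ (R ⧸ I) :=
    OrderEmbedding.ofMapLEIff (fun p => (p.1).map φI) (fun p q =>
      ⟨fun h => refl1 p.1 q.1 (p.2.2.trans inf_le_right) (q.2.2.trans inf_le_right) h,
       fun h => Submodule.map_mono h⟩)
  have e2 : Set.Icc ((⊥ : Submodule Rᵐᵒᵖ (R ⧸ K)) ⊔ c) ((⊤ : Submodule Rᵐᵒᵖ (R ⧸ K)) ⊔ c)
      ↪o Submodule Rᵐᵒᵖ (R ⧸ J) :=
    OrderEmbedding.ofMapLEIff (fun p => (p.1).map φJ) (fun p q =>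
      ⟨fun h => refl2 p.1 q.1 (le_sup_right.trans q.2.1) h,
       fun h => Submodule.map_mono h⟩)
  have p1 := devLE_of_orderEmbedding _ e1 (devLE_rKdim_quot hD I)
  have p2 := devLE_of_orderEmbedding _ e2 (devLE_rKdim_quot hD J)
  have hext := devLE_extension (max (rKdim R (R ⧸ I)) (rKdim R (R ⧸ J)))
    (⊥ : Submodule Rᵐᵒᵖ (R ⧸ K)) ⊤ c _ _ (le_max_left _ _) (le_max_right _ _) p1 p2
  have e0 : Submodule Rᵐᵒᵖ (R ⧸ K) ↪o
      Set.Icc (⊥ : Submodule Rᵐᵒᵖ (R ⧸ K)) (⊤ : Submodule Rᵐᵒᵖ (R ⧸ K)) :=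
    OrderEmbedding.ofMapLEIff (fun x => ⟨x, bot_le, le_top⟩) (fun a b => Subtype.mk_le_mk)
  exact rKdim_le_of_devLE (devLE_of_orderEmbedding _ e0 hext)

/-- Left multiplication by `x` as an `Rᵐᵒᵖ`-linear endomorphism of `R`. -/
def lmulLeft (R : Type u) [Ring R] (x : R) : R →ₗ[Rᵐᵒᵖ] R where
  toFun a := x * a
  map_add' := mul_add x
  map_smul' r a := by
    show x * (op (unop r) • a) = op (unop r) • (x * a)
    rw [op_smul_eq_mul, op_smul_eq_mul, mul_assoc]

theorem rKdim_quot_preIdeal {ν : Ordinal.{u}} (hD : DevLE ν (Submodule Rᵐᵒᵖ R))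
    (x : R) (I : RightIdeal R) :
    rKdim R (R ⧸ (preIdeal x I)) ≤ rKdim R (R ⧸ I) := by
  set P := preIdeal x I with hP
  have hle : P ≤ I.comap (lmulLeft R x) := fun a ha => ha
  set ℓ : (R ⧸ P) →ₗ[Rᵐᵒᵖ] (R ⧸ I) := Submodule.mapQ P I (lmulLeft R x) hle with hℓ
  have hinj : Function.Injective ℓ := by
    intro z z' h
    obtain ⟨w, rfl⟩ := P.mkQ_surjective z
    obtain ⟨w', rfl⟩ := P.mkQ_surjective z'
    simp only [hℓ, Submodule.mkQ_apply, Submodule.mapQ_apply] at h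
    rw [Submodule.Quotient.eq] at h
    have hxI : x * (w - w') ∈ I := by
      simpa [lmulLeft, mul_sub] using h
    rw [Submodule.mkQ_apply, Submodule.mkQ_apply, Submodule.Quotient.eq]
    exact hxI
  exact rKdim_le_of_devLE (devLE_of_orderEmbedding _ (ordembMap ℓ hinj)
    (devLE_rKdim_quot hD I))
end KdimFacts

/-- If `k = g`, then `k` is a Gabriel filter and hence `V` is a right Ore
set. -/
theorem stmt_15 {R : Type u} [Ring R] (hpr : IsPrimeRing R)
    [IsNoetherianRing R] [IsNoetherian Rᵐᵒᵖ R]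
    (n : ℕ) (hn : rKdim R R = (n : Ordinal)) (m : ℕ) (hm : m ≤ n)
    (X : Set (RightIdeal R))
    (hX : ∀ p ∈ X, IsPrimeIdeal p ∧ rKdim R (R ⧸ p) = (m : Ordinal))
    (V : Set R) (hV : V = {v : R | ∀ p ∈ X, v ∈ CMod p})
    (hkg : {I : RightIdeal R | ((I : Set R) ∩ V).Nonempty} =
      {I : RightIdeal R | rKdim R (R ⧸ I) < (m : Ordinal)}) :
    IsGabrielFilter {I : RightIdeal R | ((I : Set R) ∩ V).Nonempty} ∧
      RightOre V := by
  have hmem : ∀ I : RightIdeal R,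
      ((I : Set R) ∩ V).Nonempty ↔ rKdim R (R ⧸ I) < (m : Ordinal) := fun I =>
    Set.ext_iff.mp hkg I
  rcases Nat.eq_zero_or_pos m with hm0 | hmpos
  · -- degenerate case `m = 0`: both filters are empty and `V = ∅`
    have hVe : V = ∅ := by
      rw [Set.eq_empty_iff_forall_notMem]
      intro v hv
      have h1 : (((⊤ : RightIdeal R) : Set R) ∩ V).Nonempty := ⟨v, trivial, hv⟩
      have h2 := (hmem ⊤).mp h1
      rw [hm0] at h2
      simp only [Nat.cast_zero] at h2
      exact (not_lt_of_ge zero_le) h2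
    constructor
    · refine ⟨fun I hI J _ => ?_, fun I hI J _ => ?_, fun I hI x => ?_⟩ <;>
      · exfalso
        obtain ⟨v, -, hv2⟩ := hI
        rw [hVe] at hv2
        exact hv2
    · intro r s hs
      rw [hVe] at hs
      exact absurd hs (Set.notMem_empty s)
  · have hDne : {α : Ordinal.{u} | DevLE α (Submodule Rᵐᵒᵖ R)}.Nonempty := by
      by_contra h
      rw [Set.not_nonempty_iff_eq_empty] at h
      have h0 : rKdim R R = 0 := by
        rw [rKdim, h, Ordinal.sInf_empty]
      rw [hn] at h0
      have : n = 0 := by exact_mod_cast h0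
      omega
    have hD : DevLE (rKdim R R) (Submodule Rᵐᵒᵖ R) := csInf_mem hDne
    have gabg : IsGabrielFilter {I : RightIdeal R | rKdim R (R ⧸ I) < (m : Ordinal)} := by
      refine ⟨fun I hI J hIJ => ?_, fun I hI J hJ => ?_, fun I hI x => ?_⟩
      · exact lt_of_le_of_lt (rKdim_quot_mono hD hIJ) hI
      · exact lt_of_le_of_lt (rKdim_quot_inf hD I J) (max_lt hI hJ)
      · exact lt_of_le_of_lt (rKdim_quot_preIdeal hD x I) hI
    have gab : IsGabrielFilter {I : RightIdeal R | ((I : Set R) ∩ V).Nonempty} := by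
      rw [hkg]; exact gabg
    refine ⟨gab, ?_⟩
    intro r s hs
    have hsk : (((Submodule.span Rᵐᵒᵖ {s} : RightIdeal R) : Set R) ∩ V).Nonempty :=
      ⟨s, Submodule.mem_span_singleton_self s, hs⟩
    obtain ⟨s', hs'1, hs'2⟩ := gab.2.2 _ hsk r
    have hmul : r * s' ∈ Submodule.span Rᵐᵒᵖ ({s} : Set R) := hs'1
    obtain ⟨t, ht⟩ := Submodule.mem_span_singleton.mp hmul
    refine ⟨unop t, s', hs'2, ?_⟩
    rw [← ht, MulOpposite.smul_eq_mul_unop]
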